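/- A point [x] ∈ Σ₃ is a singular point of Σ₃ if and only if there exist t ∈ ℂ ∖ {0} and a 3-element subset A ⊆ {0,…,5} such that x_k = t for k ∈ A and x_k = −t for k ∉ A. Consequently the singular locus of Σ₃ consists of exactly 10 points of P⁵, the S₆-orbit of [1:1:1:−1:−1:−1]. -/

import Mathlib

open scoped BigOperators

/-- The vector `(1,1,1,-1,-1,-1)` in `ℂ⁶`. -/
noncomputable def eps0 : Fin 6 → ℂ := fun k => if (k : ℕ) < 3 then 1 else -1


noncomputable def sgn (A : Finset (Fin 6)) : Fin 6 → ℂ := fun k => if k ∈ A then 1 else -1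

lemma sgn_ne_zero (A : Finset (Fin 6)) : sgn A ≠ 0 := by
  intro h
  have h0 := congrFun h 0
  simp only [sgn, Pi.zero_apply] at h0
  split_ifs at h0 <;> simp_all

lemma sum_sgn (A : Finset (Fin 6)) (hA : A.card = 3) : (∑ k, sgn A k) = 0 := by
  have e : (∑ k, sgn A k) = ∑ k ∈ Finset.univ.filter (· ∈ A), (1:ℂ)
      + ∑ k ∈ Finset.univ.filter (· ∉ A), (-1:ℂ) := by
    rw [← Finset.sum_filter_add_sum_filter_not Finset.univ (· ∈ A)]
    congr 1 <;> refine Finset.sum_congr rfl (fun k hk => ?_) <;>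
      simp only [Finset.mem_filter] at hk <;> simp [sgn, hk.2]
  have h1 : Finset.univ.filter (· ∈ A) = A := by ext k; simp
  have h2 : Finset.univ.filter (· ∉ A) = Aᶜ := by ext k; simp
  rw [e, h1, h2, Finset.sum_const, Finset.sum_const, Finset.card_compl, hA]
  norm_num

lemma cube_sgn (A : Finset (Fin 6)) (k : Fin 6) : (sgn A k) ^ 3 = sgn A k := by
  simp only [sgn]; split_ifs <;> ring

lemma sq_sgn (A : Finset (Fin 6)) (k : Fin 6) : (sgn A k) ^ 2 = 1 := by
  simp only [sgn]; split_ifs <;> ring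

lemma sgn_inj {A B : Finset (Fin 6)} (h : sgn A = sgn B) : A = B := by
  ext k
  have hk := congrFun h k
  simp only [sgn] at hk
  constructor <;> intro hm
  · by_contra hb
    rw [if_pos hm, if_neg hb] at hk
    norm_num at hk
  · by_contra hb
    rw [if_neg hb, if_pos hm] at hk
    norm_num at hk

lemma sgn_compl (A : Finset (Fin 6)) : (-1 : ℂ) • sgn Aᶜ = sgn A := by
  funext k
  simp only [Pi.smul_apply, smul_eq_mul, sgn, Finset.mem_compl]
  by_cases h : k ∈ A <;> simp [h]

/-- the singular-point class of a 3-subset -/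
noncomputable def pt (A : Finset (Fin 6)) : Projectivization ℂ (Fin 6 → ℂ) :=
  Projectivization.mk ℂ (sgn A) (sgn_ne_zero A)

lemma pt_compl (A : Finset (Fin 6)) : pt Aᶜ = pt A := by
  unfold pt
  rw [Projectivization.mk_eq_mk_iff]
  exact ⟨-1, by simpa using sgn_compl Aᶜ⟩

lemma pt_inj {A B : Finset (Fin 6)} (hA : (0:Fin 6) ∈ A) (hB : (0:Fin 6) ∈ B)
    (h : pt A = pt B) : A = B := by
  rw [pt, pt, Projectivization.mk_eq_mk_iff] at h
  obtain ⟨c, hc⟩ := h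
  have h0 := congrFun hc 0
  simp only [Pi.smul_apply, smul_eq_mul, sgn, if_pos hA, if_pos hB] at h0
  have hc1 : (c : ℂ) = 1 := by
    simpa [Units.smul_def] using h0
  apply sgn_inj
  funext k
  have hk := congrFun hc k
  simpa [Units.smul_def, hc1] using hk.symm

lemma part1 (x : Fin 6 → ℂ) (hx : x ≠ 0) (h1 : (∑ k, x k) = 0) :
    ((∀ j k, (x j) ^ 2 = (x k) ^ 2) ↔
      ∃ (t : ℂ) (A : Finset (Fin 6)), t ≠ 0 ∧ A.card = 3 ∧
        ∀ k, x k = if k ∈ A then t else -t) := by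
  constructor
  · intro h
    set t := x 0 with ht
    have htne : t ≠ 0 := by
      intro h0
      apply hx
      funext k
      have hk := h k 0
      rw [← ht, h0] at hk
      simpa [pow_eq_zero_iff] using hk
    have hpm : ∀ k, x k = t ∨ x k = -t := by
      intro k
      have hk := h k 0
      rw [← ht] at hk
      have h2 : (x k - t) * (x k + t) = 0 := by linear_combination hk
      rcases mul_eq_zero.1 h2 with h' | h'
      · left; exact sub_eq_zero.1 h'
      · right; exact eq_neg_of_add_eq_zero_left h'
    set A := Finset.univ.filter (fun k => x k = t) with hAdef
    have hmem : ∀ k, k ∈ A ↔ x k = t := by intro k; simp [hAdef]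
    have hform : ∀ k, x k = if k ∈ A then t else -t := by
      intro k
      by_cases hk : k ∈ A
      · simp [hk, (hmem k).1 hk]
      · rcases hpm k with h' | h'
        · exact absurd ((hmem k).2 h') hk
        · simp [hk, h']
    refine ⟨t, A, htne, ?_, hform⟩
    -- card
    have hsum : (∑ k, x k) = (A.card : ℂ) * t + ((Aᶜ.card : ℂ)) * (-t) := by
      rw [← Finset.sum_filter_add_sum_filter_not Finset.univ (· ∈ A)]
      have e1 : Finset.univ.filter (· ∈ A) = A := by ext k; simp
      have e2 : Finset.univ.filter (· ∉ A) = Aᶜ := by ext k; simp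
      rw [e1, e2]
      rw [Finset.sum_congr rfl (fun k hk => (hform k).trans (if_pos hk)),
          Finset.sum_congr rfl (fun k hk => (hform k).trans (if_neg (by simpa using hk)))]
      simp [mul_comm]
    rw [h1] at hsum
    have hle : A.card ≤ 6 := by
      have := Finset.card_le_univ A; simpa using this
    have hcc : Aᶜ.card = 6 - A.card := by
      rw [Finset.card_compl]; simp
    rw [hcc, Nat.cast_sub hle] at hsum
    have : ((A.card : ℂ) - 3) * (2 * t) = 0 := by push_cast at hsum ⊢; linear_combination -hsum
    rcases mul_eq_zero.1 this with h' | h'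
    · have : (A.card : ℂ) = 3 := by linear_combination h'
      exact_mod_cast this
    · exact absurd (by linear_combination h'/2) htne
  · rintro ⟨t, A, ht, hA, hxk⟩ j k
    rw [hxk j, hxk k]
    split_ifs <;> ring

-- the singular set
lemma memS_iff (p : Projectivization ℂ (Fin 6 → ℂ)) :
    (∃ (x : Fin 6 → ℂ) (hx : x ≠ 0), p = Projectivization.mk ℂ x hx ∧
        (∑ k, x k) = 0 ∧ (∑ k, (x k) ^ 3) = 0 ∧
        ∀ j k, (x j) ^ 2 = (x k) ^ 2) ↔
    ∃ A : Finset (Fin 6), A.card = 3 ∧ p = pt A := by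
  constructor
  · rintro ⟨x, hx, rfl, hs, hs3, hsq⟩
    obtain ⟨t, A, ht, hA, hform⟩ := (part1 x hx hs).1 hsq
    refine ⟨A, hA, ?_⟩
    rw [pt, Projectivization.mk_eq_mk_iff]
    refine ⟨Units.mk0 t ht, ?_⟩
    funext k
    simp only [Units.smul_def, Pi.smul_apply, smul_eq_mul, Units.val_mk0, sgn, hform k]
    split_ifs <;> ring
  · rintro ⟨A, hA, rfl⟩
    refine ⟨sgn A, sgn_ne_zero A, rfl, sum_sgn A hA, ?_, fun j k => by rw [sq_sgn, sq_sgn]⟩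
    calc (∑ k, (sgn A k) ^ 3) = ∑ k, sgn A k := by
            exact Finset.sum_congr rfl (fun k _ => cube_sgn A k)
      _ = 0 := sum_sgn A hA


def B3 : Finset (Fin 6) := Finset.univ.filter (fun j : Fin 6 => (j : ℕ) < 3)

lemma B3_card : B3.card = 3 := by decide

lemma eps0_eq_sgn (σ : Equiv.Perm (Fin 6)) :
    (fun k => eps0 (σ k)) = sgn (Finset.univ.filter (fun k => σ k ∈ B3)) := by
  funext k
  by_cases h : (σ k : ℕ) < 3 <;>
    simp [eps0, sgn, B3, h]

lemma card_filter_perm (σ : Equiv.Perm (Fin 6)) :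
    (Finset.univ.filter (fun k => σ k ∈ B3)).card = 3 := by
  have he : Finset.univ.filter (fun k => σ k ∈ B3) = B3.image σ.symm := by
    ext k
    simp only [Finset.mem_filter, Finset.mem_univ, true_and, Finset.mem_image]
    constructor
    · intro h; exact ⟨σ k, h, σ.symm_apply_apply k⟩
    · rintro ⟨j, hj, rfl⟩; simpa using hj
  rw [he, Finset.card_image_of_injective _ σ.symm.injective, B3_card]

lemma exists_perm (A : Finset (Fin 6)) (hA : A.card = 3) :
    ∃ σ : Equiv.Perm (Fin 6), ∀ k, (σ k ∈ B3 ↔ k ∈ A) := by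
  have hcompl : Aᶜ.card = B3ᶜ.card := by
    rw [Finset.card_compl, Finset.card_compl, hA, B3_card]
  have eA : {x // x ∈ A} ≃ {x // x ∈ B3} := Finset.equivOfCardEq (hA.trans B3_card.symm)
  have eC : {x // x ∈ Aᶜ} ≃ {x // x ∈ B3ᶜ} := Finset.equivOfCardEq hcompl
  have eA' : {x // ¬ x ∈ A} ≃ {x // ¬ x ∈ B3} :=
    ((Equiv.subtypeEquivRight (fun x => (Finset.mem_compl).symm)).trans eC).trans
      (Equiv.subtypeEquivRight (fun x => Finset.mem_compl))
  refine ⟨(Equiv.sumCompl (· ∈ A)).symm.trans ((eA.sumCongr eA').trans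
      (Equiv.sumCompl (· ∈ B3))), fun k => ?_⟩
  by_cases h : k ∈ A
  · simp only [Equiv.trans_apply, Equiv.sumCompl_symm_apply_of_pos h,
      Equiv.sumCongr_apply, Sum.map_inl, Equiv.sumCompl_apply_inl]
    exact iff_of_true (eA ⟨k, h⟩).2 h
  · simp only [Equiv.trans_apply, Equiv.sumCompl_symm_apply_of_neg h,
      Equiv.sumCongr_apply, Sum.map_inr, Equiv.sumCompl_apply_inr]
    exact iff_of_false (eA' ⟨k, h⟩).2 h


noncomputable def F10 : Finset (Finset (Fin 6)) :=
  Finset.univ.filter (fun A : Finset (Fin 6) => A.card = 3 ∧ (0 : Fin 6) ∈ A)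

lemma F10_card : F10.card = 10 := by decide

theorem segre_cubic_singular_locus :
    (∀ x : Fin 6 → ℂ, x ≠ 0 → (∑ k, x k) = 0 → (∑ k, (x k) ^ 3) = 0 →
      ((∀ j k, (x j) ^ 2 = (x k) ^ 2) ↔
        ∃ (t : ℂ) (A : Finset (Fin 6)), t ≠ 0 ∧ A.card = 3 ∧
          ∀ k, x k = if k ∈ A then t else -t)) ∧
    {p : Projectivization ℂ (Fin 6 → ℂ) |
      ∃ (x : Fin 6 → ℂ) (hx : x ≠ 0), p = Projectivization.mk ℂ x hx ∧
        (∑ k, x k) = 0 ∧ (∑ k, (x k) ^ 3) = 0 ∧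
        ∀ j k, (x j) ^ 2 = (x k) ^ 2}.ncard = 10 ∧
    {p : Projectivization ℂ (Fin 6 → ℂ) |
      ∃ (x : Fin 6 → ℂ) (hx : x ≠ 0), p = Projectivization.mk ℂ x hx ∧
        (∑ k, x k) = 0 ∧ (∑ k, (x k) ^ 3) = 0 ∧
        ∀ j k, (x j) ^ 2 = (x k) ^ 2} =
      {p : Projectivization ℂ (Fin 6 → ℂ) |
        ∃ (σ : Equiv.Perm (Fin 6)) (h : (fun k => eps0 (σ k)) ≠ 0),
          p = Projectivization.mk ℂ (fun k => eps0 (σ k)) h} := by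
  refine ⟨fun x hx h1 _ => part1 x hx h1, ?_, ?_⟩
  · -- ncard = 10
    have hS : {p : Projectivization ℂ (Fin 6 → ℂ) |
        ∃ (x : Fin 6 → ℂ) (hx : x ≠ 0), p = Projectivization.mk ℂ x hx ∧
          (∑ k, x k) = 0 ∧ (∑ k, (x k) ^ 3) = 0 ∧
          ∀ j k, (x j) ^ 2 = (x k) ^ 2} = pt '' ↑F10 := by
      ext p
      rw [Set.mem_setOf_eq, memS_iff]
      constructor
      · rintro ⟨A, hA, rfl⟩
        by_cases h0 : (0 : Fin 6) ∈ A
        · exact ⟨A, by simp [F10, hA, h0], rfl⟩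
        · refine ⟨Aᶜ, ?_, (pt_compl A)⟩
          simp only [Finset.coe_filter, F10, Set.mem_setOf_eq, Finset.mem_univ, true_and]
          exact ⟨by rw [Finset.card_compl, hA]; rfl, Finset.mem_compl.2 h0⟩
      · rintro ⟨A, hA, rfl⟩
        simp only [Finset.coe_filter, F10, Set.mem_setOf_eq, Finset.mem_univ, true_and] at hA
        exact ⟨A, hA.1, rfl⟩
    rw [hS, Set.ncard_image_of_injOn, Set.ncard_coe_finset, F10_card]
    intro A hA B hB h
    simp only [Finset.mem_coe, F10, Finset.mem_filter] at hA hB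
    exact pt_inj hA.2.2 hB.2.2 h
  · -- set equality
    ext p
    rw [Set.mem_setOf_eq, memS_iff, Set.mem_setOf_eq]
    constructor
    · rintro ⟨A, hA, rfl⟩
      obtain ⟨σ, hσ⟩ := exists_perm A hA
      have hv : (fun k => eps0 (σ k)) = sgn A := by
        rw [eps0_eq_sgn]
        have : Finset.univ.filter (fun k => σ k ∈ B3) = A := by
          ext k; simp [hσ k]
        rw [this]
      refine ⟨σ, by rw [hv]; exact sgn_ne_zero A, ?_⟩
      rw [pt, Projectivization.mk_eq_mk_iff]
      exact ⟨1, by simp [hv]⟩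
    · rintro ⟨σ, hσ, rfl⟩
      refine ⟨Finset.univ.filter (fun k => σ k ∈ B3), card_filter_perm σ, ?_⟩
      rw [pt, Projectivization.mk_eq_mk_iff]
      exact ⟨1, by simp [← eps0_eq_sgn σ]⟩
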